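/- Let m_θ ≥ 2 and m_φ ≥ 1 be natural numbers and set m := m_φ·(m_θ − 1) + 1. For x ∈ {0, 1, …, m−1} define θ(x) := arccos( 2·(⌊x/m_φ⌋ + 1)/m_θ − 1 ) and φ(x) := π·(x mod m_φ)/m_φ, and define the vectors v₀(x) := (cos(θ(x)/2), e^{iφ(x)}·sin(θ(x)/2)) ∈ ℂ² and v₁(x) := (sin(θ(x)/2), −e^{iφ(x)}·cos(θ(x)/2)) ∈ ℂ². Then: (a) for every x ∈ {0,…,m−1}, the pair {v₀(x), v₁(x)} is an orthonormal basis of ℂ², i.e. ‖v₀(x)‖ = ‖v₁(x)‖ = 1 and ⟨v₀(x), v₁(x)⟩ = 0; (b) the map x ↦ v₀(x)v₀(x)† (the rank-one orthogonal projection onto v₀(x)) is injective on {0,…,m−1}. -/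

import Mathlib

open BigOperators

noncomputable section

/-- Outer product vv† as a matrix. -/
def outer {ι : Type*} [Fintype ι] (ψ : ι → ℂ) : Matrix ι ι ℂ :=
  fun i j => ψ i * (starRingEnd ℂ) (ψ j)

/-- The polar angle θ(x) = arccos(2(⌊x/m_φ⌋ + 1)/m_θ − 1). -/
def theta (mθ mφ x : ℕ) : ℝ :=
  Real.arccos (2 * ((x / mφ + 1 : ℕ) : ℝ) / (mθ : ℝ) - 1)

/-- The azimuthal angle φ(x) = π (x mod m_φ)/m_φ. -/
def phi (mφ x : ℕ) : ℝ := Real.pi * ((x % mφ : ℕ) : ℝ) / (mφ : ℝ)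

/-- The basis vector v₀(x) = (cos(θ(x)/2), e^{iφ(x)} sin(θ(x)/2)). -/
def v0 (mθ mφ x : ℕ) : Fin 2 → ℂ :=
  ![(Real.cos (theta mθ mφ x / 2) : ℂ),
    Complex.exp (Complex.I * (phi mφ x : ℂ)) * (Real.sin (theta mθ mφ x / 2) : ℂ)]

/-- The basis vector v₁(x) = (sin(θ(x)/2), −e^{iφ(x)} cos(θ(x)/2)). -/
def v1 (mθ mφ x : ℕ) : Fin 2 → ℂ :=
  ![(Real.sin (theta mθ mφ x / 2) : ℂ),
    -(Complex.exp (Complex.I * (phi mφ x : ℂ)) * (Real.cos (theta mθ mφ x / 2) : ℂ))]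

-- auxiliary lemmas

lemma norm_aux (t p : ℝ) :
    ‖(Real.cos t : ℂ)‖ ^ 2 + ‖Complex.exp (Complex.I * p) * (Real.sin t : ℂ)‖ ^ 2 = 1 := by
  rw [norm_mul, Complex.norm_real, Complex.norm_real, Complex.norm_exp]
  simp only [Complex.mul_re, Complex.I_re, Complex.ofReal_re, Complex.I_im, Complex.ofReal_im,
    mul_zero, one_mul, zero_mul, sub_zero, zero_sub, zero_mul]
  norm_num [sq_abs]

lemma norm_aux' (t p : ℝ) :
    ‖(Real.sin t : ℂ)‖ ^ 2 + ‖-(Complex.exp (Complex.I * p) * (Real.cos t : ℂ))‖ ^ 2 = 1 := by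
  rw [norm_neg, norm_mul, Complex.norm_real, Complex.norm_real,
    Complex.norm_exp]
  simp only [Complex.mul_re, Complex.I_re, Complex.ofReal_re, Complex.I_im, Complex.ofReal_im,
    mul_zero, one_mul, zero_mul, sub_zero, zero_sub, zero_mul]
  norm_num [sq_abs]

lemma inner_aux (t p : ℝ) :
    (starRingEnd ℂ) (Real.cos t : ℂ) * (Real.sin t : ℂ) +
    (starRingEnd ℂ) (Complex.exp (Complex.I * p) * (Real.sin t : ℂ)) *
      (-(Complex.exp (Complex.I * p) * (Real.cos t : ℂ))) = 0 := by
  have h : (starRingEnd ℂ) (Complex.exp (Complex.I * p)) * Complex.exp (Complex.I * p) = 1 := by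
    rw [← Complex.exp_conj, ← Complex.exp_add]
    simp [Complex.conj_I]
  simp only [map_mul, Complex.conj_ofReal]
  linear_combination (-(Real.sin t : ℂ) * (Real.cos t)) * h

lemma arg_bounds {mθ mφ x : ℕ} (hmθ : 2 ≤ mθ) (hmφ : 1 ≤ mφ)
    (hx : x ≤ mφ * (mθ - 1)) :
    -1 < 2 * ((x / mφ + 1 : ℕ) : ℝ) / (mθ : ℝ) - 1 ∧
    2 * ((x / mφ + 1 : ℕ) : ℝ) / (mθ : ℝ) - 1 ≤ 1 := by
  have hmθ0 : (0:ℝ) < mθ := by positivity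
  have hq : x / mφ + 1 ≤ mθ := by
    have : x / mφ ≤ mθ - 1 := by
      calc x / mφ ≤ mφ * (mθ - 1) / mφ := Nat.div_le_div_right hx
        _ = mθ - 1 := Nat.mul_div_cancel_left _ (by omega)
    omega
  have hqR : ((x / mφ + 1 : ℕ) : ℝ) ≤ mθ := by exact_mod_cast hq
  have hq1 : (1:ℝ) ≤ ((x / mφ + 1 : ℕ) : ℝ) := by exact_mod_cast Nat.le_add_left 1 (x / mφ)
  constructor
  · have : (0:ℝ) < 2 * ((x / mφ + 1 : ℕ) : ℝ) / mθ := by positivity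
    linarith
  · rw [sub_le_iff_le_add, div_le_iff₀ hmθ0]
    linarith

lemma theta_lt_pi {mθ mφ x : ℕ} (hmθ : 2 ≤ mθ) (hmφ : 1 ≤ mφ)
    (hx : x ≤ mφ * (mθ - 1)) : theta mθ mφ x < Real.pi :=
  lt_of_le_of_ne (Real.arccos_le_pi _)
    (fun h => absurd (Real.arccos_eq_pi.1 h) (by linarith [(arg_bounds hmθ hmφ hx).1]))

lemma cos_theta {mθ mφ x : ℕ} (hmθ : 2 ≤ mθ) (hmφ : 1 ≤ mφ)
    (hx : x ≤ mφ * (mθ - 1)) :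
    Real.cos (theta mθ mφ x) = 2 * ((x / mφ + 1 : ℕ) : ℝ) / (mθ : ℝ) - 1 :=
  Real.cos_arccos (le_of_lt (arg_bounds hmθ hmφ hx).1) (arg_bounds hmθ hmφ hx).2

lemma cos_half_pos {mθ mφ x : ℕ} (hmθ : 2 ≤ mθ) (hmφ : 1 ≤ mφ)
    (hx : x ≤ mφ * (mθ - 1)) : 0 < Real.cos (theta mθ mφ x / 2) := by
  have h1 := theta_lt_pi hmθ hmφ hx
  have h0 : 0 ≤ theta mθ mφ x := Real.arccos_nonneg _
  apply Real.cos_pos_of_mem_Ioo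
  constructor <;> [linarith [Real.pi_pos]; linarith]

lemma phi_mem {mφ x : ℕ} (hmφ : 1 ≤ mφ) : 0 ≤ phi mφ x ∧ phi mφ x < Real.pi := by
  have hmφ0 : (0:ℝ) < mφ := by positivity
  have hr : ((x % mφ : ℕ) : ℝ) < mφ := by exact_mod_cast Nat.mod_lt x (by omega)
  have hr0 : (0:ℝ) ≤ ((x % mφ : ℕ) : ℝ) := Nat.cast_nonneg _
  constructor
  · unfold phi; positivity
  · unfold phi
    rw [div_lt_iff₀ hmφ0]
    nlinarith [Real.pi_pos]

theorem bloch_sphere_bases (mθ mφ : ℕ) (hmθ : 2 ≤ mθ) (hmφ : 1 ≤ mφ)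
    (m : ℕ) (hm : m = mφ * (mθ - 1) + 1) :
    (∀ x : Fin m,
      (∑ i, ‖v0 mθ mφ (x : ℕ) i‖ ^ 2 = 1) ∧
      (∑ i, ‖v1 mθ mφ (x : ℕ) i‖ ^ 2 = 1) ∧
      (∑ i, (starRingEnd ℂ) (v0 mθ mφ (x : ℕ) i) * v1 mθ mφ (x : ℕ) i = 0)) ∧
    Function.Injective (fun x : Fin m => outer (v0 mθ mφ (x : ℕ))) := by
  constructor
  · intro x
    refine ⟨?_, ?_, ?_⟩
    · rw [Fin.sum_univ_two]
      exact norm_aux _ _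
    · rw [Fin.sum_univ_two]
      exact norm_aux' _ _
    · rw [Fin.sum_univ_two]
      exact inner_aux _ _
  · intro x y hxy
    have hxm : (x : ℕ) ≤ mφ * (mθ - 1) := by have := x.isLt; omega
    have hym : (y : ℕ) ≤ mφ * (mθ - 1) := by have := y.isLt; omega
    have h : outer (v0 mθ mφ (x:ℕ)) = outer (v0 mθ mφ (y:ℕ)) := hxy
    have h00 := congrFun (congrFun h 0) 0
    have h10 := congrFun (congrFun h 1) 0
    simp only [outer, v0, Matrix.cons_val_zero, Matrix.cons_val_one, Matrix.head_cons,
      Complex.conj_ofReal, map_mul] at h00 h10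
    set tx := theta mθ mφ (x:ℕ) / 2 with htx
    set ty := theta mθ mφ (y:ℕ) / 2 with hty
    have hcx : 0 < Real.cos tx := cos_half_pos hmθ hmφ hxm
    have hcy : 0 < Real.cos ty := cos_half_pos hmθ hmφ hym
    have h00' : Real.cos tx * Real.cos tx = Real.cos ty * Real.cos ty := by exact_mod_cast h00
    have hcos : Real.cos tx = Real.cos ty := by
      rcases mul_self_eq_mul_self_iff.1 h00' with h1 | h1
      · exact h1
      · linarith
    have h0x : 0 ≤ theta mθ mφ (x:ℕ) := Real.arccos_nonneg _
    have h0y : 0 ≤ theta mθ mφ (y:ℕ) := Real.arccos_nonneg _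
    have hpx : theta mθ mφ (x:ℕ) < Real.pi := theta_lt_pi hmθ hmφ hxm
    have hpy : theta mθ mφ (y:ℕ) < Real.pi := theta_lt_pi hmθ hmφ hym
    have ht : tx = ty := by
      apply Real.injOn_cos ⟨by linarith, by linarith⟩ ⟨by linarith, by linarith⟩ hcos
    have hθ : theta mθ mφ (x:ℕ) = theta mθ mφ (y:ℕ) := by
      have := ht; rw [htx, hty] at this; linarith
    have hmθ0 : (mθ:ℝ) ≠ 0 := by positivity
    have hq : (x:ℕ) / mφ = (y:ℕ) / mφ := by
      have hc : (2:ℝ) * (((x:ℕ) / mφ + 1 : ℕ) : ℝ) / mθ - 1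
          = 2 * (((y:ℕ) / mφ + 1 : ℕ) : ℝ) / mθ - 1 := by
        rw [← cos_theta hmθ hmφ hxm, ← cos_theta hmθ hmφ hym, hθ]
      field_simp at hc
      have h' : (((x:ℕ) / mφ : ℕ) : ℝ) = (((y:ℕ) / mφ : ℕ) : ℝ) := by
        push_cast at hc ⊢; linarith
      exact_mod_cast h'
    by_cases hq1 : (x:ℕ) / mφ + 1 = mθ
    · -- x = y = mφ * (mθ - 1)
      have hx1 : (x:ℕ) = mφ * (mθ - 1) := by
        have h2 : (x:ℕ) / mφ = mθ - 1 := by omega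
        have h1 : mφ * (mθ - 1) ≤ (x:ℕ) := by
          rw [mul_comm, ← h2]; exact Nat.div_mul_le_self _ _
        omega
      have hy1 : (y:ℕ) = mφ * (mθ - 1) := by
        have h2 : (y:ℕ) / mφ = mθ - 1 := by omega
        have h1 : mφ * (mθ - 1) ≤ (y:ℕ) := by
          rw [mul_comm, ← h2]; exact Nat.div_mul_le_self _ _
        omega
      exact Fin.ext (by rw [hx1, hy1])
    · -- sin tx > 0, deduce phases equal
      have hlt : ((x:ℕ) / mφ + 1 : ℕ) < mθ := by
        have : (x:ℕ) / mφ ≤ mθ - 1 := by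
          calc (x:ℕ) / mφ ≤ mφ * (mθ - 1) / mφ := Nat.div_le_div_right hxm
            _ = mθ - 1 := Nat.mul_div_cancel_left _ (by omega)
        omega
      have harg : (2:ℝ) * (((x:ℕ) / mφ + 1 : ℕ) : ℝ) / mθ - 1 < 1 := by
        have hltR : (((x:ℕ) / mφ + 1 : ℕ) : ℝ) < mθ := by exact_mod_cast hlt
        rw [sub_lt_iff_lt_add, div_lt_iff₀ (by positivity)]
        linarith
      have hθpos : 0 < theta mθ mφ (x:ℕ) := Real.arccos_pos.2 harg
      have hsx : 0 < Real.sin tx := by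
        apply Real.sin_pos_of_pos_of_lt_pi
        · rw [htx]; linarith
        · rw [htx]; linarith [Real.pi_pos]
      have hexp : Complex.exp (Complex.I * (phi mφ (x:ℕ) : ℂ))
          = Complex.exp (Complex.I * (phi mφ (y:ℕ) : ℂ)) := by
        have hsne : (Real.sin tx : ℂ) ≠ 0 := Complex.ofReal_ne_zero.2 (ne_of_gt hsx)
        have hcne : (Real.cos tx : ℂ) ≠ 0 := Complex.ofReal_ne_zero.2 (ne_of_gt hcx)
        rw [← ht] at h10
        exact mul_right_cancel₀ hsne (mul_right_cancel₀ hcne h10)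
      have hφ : phi mφ (x:ℕ) = phi mφ (y:ℕ) := by
        obtain ⟨n, hn⟩ := Complex.exp_eq_exp_iff_exists_int.1 hexp
        have him := congrArg Complex.im hn
        simp [Complex.mul_im, Complex.add_im] at him
        have hbx := phi_mem (x := (x:ℕ)) hmφ
        have hby := phi_mem (x := (y:ℕ)) hmφ
        have hn0 : n = 0 := by
          have hπ := Real.pi_pos
          have h1 : (-1:ℝ) < n := by nlinarith
          have h2 : (n:ℝ) < 1 := by nlinarith
          have h1' : (-1:ℤ) < n := by exact_mod_cast h1
          have h2' : n < (1:ℤ) := by exact_mod_cast h2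
          omega
        rw [hn0] at him
        simpa using him
      have hr : (x:ℕ) % mφ = (y:ℕ) % mφ := by
        have hπ : Real.pi ≠ 0 := Real.pi_ne_zero
        have hmφ0 : (mφ:ℝ) ≠ 0 := by positivity
        unfold phi at hφ
        rw [div_eq_div_iff hmφ0 hmφ0] at hφ
        have h2 := mul_right_cancel₀ hmφ0 hφ
        have h3 := mul_left_cancel₀ hπ h2
        exact_mod_cast h3
      have : (x:ℕ) = (y:ℕ) := by
        have hx' := Nat.div_add_mod (x:ℕ) mφ
        have hy' := Nat.div_add_mod (y:ℕ) mφ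
        rw [hq] at hx'
        omega
      exact Fin.ext this
end
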